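/- Let s > 0 and R' > 0. There exist a constant C > 0 and ε₀ ∈ (0,1), depending only on s and R', such that for every ε ∈ (0, ε₀), setting t = (−log ε)/(16R') and ρ = t^{4/(11+2s)}, one has ρ ≥ 1, ρ ≤ t, and ρ³ e^{4(t+ρ)R'} (1+ρ/t)² ε² + ρ³ (1+ρ⁴)²/t⁴ + ρ^{−2s} ≤ C (−log ε)^{−8s/(11+2s)}. -/
import Mathlib

/-!
STATEMENT 3: The elementary optimization step.  For `s > 0`, `R' > 0` there are
`C > 0` and `ε₀ ∈ (0,1)` (depending only on `s, R'`) such that for every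
`ε ∈ (0, ε₀)`, with `t = (−log ε)/(16R')` and `ρ = t^{4/(11+2s)}`, one has
`ρ ≥ 1`, `ρ ≤ t`, and
`ρ³ e^{4(t+ρ)R'}(1+ρ/t)² ε² + ρ³(1+ρ⁴)²/t⁴ + ρ^{−2s} ≤ C (−log ε)^{−8s/(11+2s)}`.
-/

noncomputable section

theorem stmt3 (s R' : ℝ) (hs : 0 < s) (hR' : 0 < R') :
    ∃ C ε₀ : ℝ, 0 < C ∧ ε₀ ∈ Set.Ioo (0 : ℝ) 1 ∧
      ∀ ε : ℝ, ε ∈ Set.Ioo (0 : ℝ) ε₀ →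
        1 ≤ ((-Real.log ε) / (16 * R')) ^ ((4 : ℝ) / (11 + 2 * s)) ∧
        ((-Real.log ε) / (16 * R')) ^ ((4 : ℝ) / (11 + 2 * s))
          ≤ (-Real.log ε) / (16 * R') ∧
        (((-Real.log ε) / (16 * R')) ^ ((4 : ℝ) / (11 + 2 * s))) ^ (3 : ℕ)
            * Real.exp (4 * ((-Real.log ε) / (16 * R')
                + ((-Real.log ε) / (16 * R')) ^ ((4 : ℝ) / (11 + 2 * s))) * R')
            * (1 + (((-Real.log ε) / (16 * R')) ^ ((4 : ℝ) / (11 + 2 * s)))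
                / ((-Real.log ε) / (16 * R'))) ^ (2 : ℕ) * ε ^ (2 : ℕ)
          + (((-Real.log ε) / (16 * R')) ^ ((4 : ℝ) / (11 + 2 * s))) ^ (3 : ℕ)
            * (1 + (((-Real.log ε) / (16 * R')) ^ ((4 : ℝ) / (11 + 2 * s))) ^ (4 : ℕ)) ^ (2 : ℕ)
            / ((-Real.log ε) / (16 * R')) ^ (4 : ℕ)
          + (((-Real.log ε) / (16 * R')) ^ ((4 : ℝ) / (11 + 2 * s))) ^ (-(2 * s))
          ≤ C * (-Real.log ε) ^ (-(8 * s / (11 + 2 * s))) := by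
  have h11 : (0:ℝ) < 11 + 2 * s := by linarith
  have hR16 : (0:ℝ) < 16 * R' := by linarith
  set a : ℝ := 4 / (11 + 2 * s) with hadef
  set β : ℝ := 8 * s / (11 + 2 * s) with hbdef
  have ha : 0 < a := by rw [hadef]; positivity
  have ha1 : a ≤ 1 := by rw [hadef, div_le_one h11]; linarith
  have hb : 0 < β := by rw [hbdef]; positivity
  have hb4 : β ≤ 4 := by rw [hbdef, div_le_iff₀ h11]; linarith
  have hab : a * (2 * s) = β := by rw [hadef, hbdef]; field_simp; ring
  have h11a : a * 11 - 4 = -β := by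
    rw [hadef, hbdef]; field_simp; ring
  set K : ℝ := (16 * R') ^ β with hK
  have hKpos : 0 < K := Real.rpow_pos_of_pos hR16 β
  set C₁ : ℝ := 4 * 14 ^ 7 / (16 * R') ^ (3:ℕ) with hC1
  have hC1pos : 0 < C₁ := by rw [hC1]; positivity
  set M : ℝ := max (16 * R') 1 with hM
  have hM1 : (1:ℝ) ≤ M := le_max_right _ _
  refine ⟨C₁ + 4 * K + K, Real.exp (-(M + 1)), by positivity, ⟨Real.exp_pos _, ?_⟩, ?_⟩
  · exact Real.exp_lt_one_iff.mpr (by linarith)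
  intro ε hε
  obtain ⟨hε0, hε1⟩ := hε
  have hlog : Real.log ε < -(M + 1) := by
    have := Real.log_lt_log hε0 hε1
    rwa [Real.log_exp] at this
  set L : ℝ := -Real.log ε with hLdef
  have hLM : M + 1 < L := by rw [hLdef]; linarith
  have hL16 : 16 * R' ≤ L := le_trans (le_max_left _ _) (by linarith : M ≤ L)
  have hL1 : 1 ≤ L := le_trans hM1 (by linarith : M ≤ L)
  have hL0 : 0 < L := by linarith
  set t : ℝ := L / (16 * R') with htdef
  have ht0 : 0 < t := by rw [htdef]; positivity
  have ht1 : 1 ≤ t := (one_le_div hR16).mpr hL16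
  set ρ : ℝ := t ^ a with hrdef
  have hρ0 : 0 < ρ := Real.rpow_pos_of_pos ht0 a
  have hρ1 : 1 ≤ ρ := Real.one_le_rpow ht1 ha.le
  have hρt : ρ ≤ t := by
    calc ρ = t ^ a := rfl
    _ ≤ t ^ (1:ℝ) := Real.rpow_le_rpow_of_exponent_le ht1 ha1
    _ = t := Real.rpow_one t
  refine ⟨hρ1, hρt, ?_⟩
  -- key conversion: t ^ (-β) = K * L ^ (-β)
  have htb : t ^ (-β) = K * L ^ (-β) := by
    rw [htdef, Real.div_rpow hL0.le hR16.le, Real.rpow_neg hR16.le, div_eq_mul_inv, inv_inv, hK]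
    ring
  -- Third term
  have h3 : ρ ^ (-(2 * s)) = K * L ^ (-β) := by
    rw [hrdef, ← Real.rpow_mul ht0.le, mul_neg, hab, htb]
  -- Second term
  have h2 : ρ ^ (3:ℕ) * (1 + ρ ^ (4:ℕ)) ^ (2:ℕ) / t ^ (4:ℕ) ≤ 4 * (K * L ^ (-β)) := by
    have h14 : 1 + ρ ^ (4:ℕ) ≤ 2 * ρ ^ (4:ℕ) := by
      have h4 : 1 ≤ ρ ^ (4:ℕ) := one_le_pow₀ hρ1
      linarith
    have hstep : ρ ^ (3:ℕ) * (1 + ρ ^ (4:ℕ)) ^ (2:ℕ) ≤ 4 * ρ ^ (11:ℕ) := by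
      have h2' : (1 + ρ ^ (4:ℕ)) ^ (2:ℕ) ≤ (2 * ρ ^ (4:ℕ)) ^ (2:ℕ) :=
        pow_le_pow_left₀ (by positivity) h14 2
      calc ρ ^ (3:ℕ) * (1 + ρ ^ (4:ℕ)) ^ (2:ℕ)
          ≤ ρ ^ (3:ℕ) * (2 * ρ ^ (4:ℕ)) ^ (2:ℕ) :=
            mul_le_mul_of_nonneg_left h2' (by positivity)
        _ = 4 * ρ ^ (11:ℕ) := by ring
    have hdiv : ρ ^ (3:ℕ) * (1 + ρ ^ (4:ℕ)) ^ (2:ℕ) / t ^ (4:ℕ)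
        ≤ 4 * ρ ^ (11:ℕ) / t ^ (4:ℕ) := by
      gcongr
    refine hdiv.trans (le_of_eq ?_)
    have : ρ ^ (11:ℕ) = t ^ (a * 11) := by
      rw [hrdef, ← Real.rpow_natCast (t ^ a) 11, ← Real.rpow_mul ht0.le]
      norm_num
    rw [this, mul_div_assoc]
    have ht4 : t ^ (4:ℕ) = t ^ ((4:ℝ)) := (Real.rpow_natCast t 4).symm
    rw [ht4, ← Real.rpow_sub ht0, h11a, htb]
  -- First term
  have hfrac : ρ / t ≤ 1 := (div_le_one ht0).mpr hρt
  have h8t : 8 * t * R' = L / 2 := by rw [htdef]; field_simp; ring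
  have hexp : Real.exp (4 * (t + ρ) * R') ≤ Real.exp (L / 2) := by
    apply Real.exp_le_exp.mpr
    have : 4 * (t + ρ) * R' ≤ 8 * t * R' := by nlinarith [hρt, hR'.le, ht0.le]
    linarith [this]
  have hε2 : ε ^ (2:ℕ) = Real.exp (-(2 * L)) := by
    have h1 : ε = Real.exp (Real.log ε) := (Real.exp_log hε0).symm
    calc ε ^ (2:ℕ) = Real.exp (Real.log ε) ^ (2:ℕ) := by rw [← h1]
      _ = Real.exp ((2:ℕ) * Real.log ε) := (Real.exp_nat_mul _ 2).symm
      _ = Real.exp (-(2 * L)) := by rw [hLdef]; norm_num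
  have hLe : L ≤ 14 * Real.exp (L / 14) := by
    have := Real.add_one_le_exp (L / 14)
    linarith
  have h7 : L ^ (7:ℕ) ≤ 14 ^ 7 * Real.exp (L / 2) := by
    calc L ^ (7:ℕ) ≤ (14 * Real.exp (L / 14)) ^ (7:ℕ) := pow_le_pow_left₀ hL0.le hLe 7
      _ = 14 ^ 7 * Real.exp (L / 14) ^ (7:ℕ) := by ring
      _ = 14 ^ 7 * Real.exp ((7:ℕ) * (L / 14)) := by rw [Real.exp_nat_mul]
      _ = 14 ^ 7 * Real.exp (L / 2) := by
        congr 1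
        push_cast
        ring
  have h37 : L ^ (3:ℕ) * L ^ β ≤ L ^ (7:ℕ) := by
    rw [← Real.rpow_natCast L 3, ← Real.rpow_add hL0, ← Real.rpow_natCast L 7]
    exact Real.rpow_le_rpow_of_exponent_le hL1 (by push_cast; linarith)
  have hLβ : L ^ β * L ^ (-β) = 1 := by
    rw [← Real.rpow_add hL0]; simp
  have hkey : L ^ (3:ℕ) * Real.exp (-(3 * L / 2)) ≤ 14 ^ 7 * L ^ (-β) := by
    have hnb : (0:ℝ) < L ^ (-β) := Real.rpow_pos_of_pos hL0 _
    have hEpos : (0:ℝ) < L ^ (-β) * Real.exp (-(3 * L / 2)) := by positivity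
    have hee2 : Real.exp (L / 2) * Real.exp (-(3 * L / 2)) = Real.exp (-L) := by
      rw [← Real.exp_add]
      congr 1
      ring
    have hexp1 : Real.exp (-L) ≤ 1 := Real.exp_le_one_iff.mpr (by linarith)
    calc L ^ (3:ℕ) * Real.exp (-(3 * L / 2))
        = (L ^ (3:ℕ) * L ^ β) * (L ^ (-β) * Real.exp (-(3 * L / 2))) := by
          have : L ^ (3:ℕ) * L ^ β * (L ^ (-β) * Real.exp (-(3 * L / 2)))
              = L ^ (3:ℕ) * (L ^ β * L ^ (-β)) * Real.exp (-(3 * L / 2)) := by ring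
          rw [this, hLβ, mul_one]
      _ ≤ L ^ (7:ℕ) * (L ^ (-β) * Real.exp (-(3 * L / 2))) :=
          mul_le_mul_of_nonneg_right h37 hEpos.le
      _ ≤ (14 ^ 7 * Real.exp (L / 2)) * (L ^ (-β) * Real.exp (-(3 * L / 2))) :=
          mul_le_mul_of_nonneg_right h7 hEpos.le
      _ = 14 ^ 7 * L ^ (-β) * (Real.exp (L / 2) * Real.exp (-(3 * L / 2))) := by ring
      _ = 14 ^ 7 * L ^ (-β) * Real.exp (-L) := by rw [hee2]
      _ ≤ 14 ^ 7 * L ^ (-β) * 1 := by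
          have : (0:ℝ) ≤ 14 ^ 7 * L ^ (-β) := by positivity
          exact mul_le_mul_of_nonneg_left hexp1 this
      _ = 14 ^ 7 * L ^ (-β) := mul_one _
  have h1 : ρ ^ (3:ℕ) * Real.exp (4 * (t + ρ) * R') * (1 + ρ / t) ^ (2:ℕ) * ε ^ (2:ℕ)
      ≤ C₁ * L ^ (-β) := by
    have hb1 : ρ ^ (3:ℕ) * Real.exp (4 * (t + ρ) * R') * (1 + ρ / t) ^ (2:ℕ) * ε ^ (2:ℕ)
        ≤ t ^ (3:ℕ) * Real.exp (L / 2) * (1 + 1) ^ (2:ℕ) * Real.exp (-(2 * L)) := by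
      rw [hε2]
      gcongr
    refine hb1.trans ?_
    have ht3 : t ^ (3:ℕ) = L ^ (3:ℕ) / (16 * R') ^ (3:ℕ) := by rw [htdef]; rw [div_pow]
    have hee : Real.exp (L / 2) * Real.exp (-(2 * L)) = Real.exp (-(3 * L / 2)) := by
      rw [← Real.exp_add]; ring_nf
    calc t ^ (3:ℕ) * Real.exp (L / 2) * (1 + 1) ^ (2:ℕ) * Real.exp (-(2 * L))
        = 4 / (16 * R') ^ (3:ℕ) * (L ^ (3:ℕ) * (Real.exp (L / 2) * Real.exp (-(2 * L)))) := by
          rw [ht3]; ring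
      _ = 4 / (16 * R') ^ (3:ℕ) * (L ^ (3:ℕ) * Real.exp (-(3 * L / 2))) := by rw [hee]
      _ ≤ 4 / (16 * R') ^ (3:ℕ) * (14 ^ 7 * L ^ (-β)) := by gcongr
      _ = C₁ * L ^ (-β) := by rw [hC1]; ring
  linarith [h1, h2, h3.le, h3.ge]

end
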